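/- arXiv:1005.3696 — 2 statements merged into one kernel-verified Lean document; each statement's English description precedes it below -/
import Mathlib

section
/- Let E be a real vector space, S ⊆ E a nonempty convex subset, n ≥ 1, and f₀, f₁, …, fₙ : E → ℝ linear maps such that f₀(ω) = 1 for all ω ∈ S. Then the following two statements are equivalent: (1) for every tuple (c₀, c₁, …, cₙ) ∈ ℝ^{n+1} with (c₁, …, cₙ) ≠ 0, the set { c₀·f₀(ω) + Σᵢ₌₁ⁿ cᵢ·fᵢ(ω) : ω ∈ S } equals all of ℝ; (2) for every (t₁, …, tₙ) ∈ ℝⁿ there exists ω ∈ S with fᵢ(ω) = tᵢ for all i = 1, …, n. -/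
/-- Abstract form of Proposition 4.2: for a nonempty convex set `S` of "states"
in a real vector space `E`, linear maps `f₀, f₁, …, fₙ : E → ℝ` with `f₀ ≡ 1`
on `S`, the following are equivalent: (1) every linear combination
`c₀ f₀ + Σ cᵢ fᵢ` with `(c₁,…,cₙ) ≠ 0` attains every real value on `S`;
(2) every tuple `(t₁,…,tₙ) ∈ ℝⁿ` is realized as `(f₁(ω),…,fₙ(ω))` for some
`ω ∈ S`. -/
theorem numericalRange_unbounded_iff_joint_range_univ
    {E : Type*} [AddCommGroup E] [Module ℝ E]
    {S : Set E} (hconv : Convex ℝ S) (hne : S.Nonempty)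
    {n : ℕ} (hn : 1 ≤ n)
    (f₀ : E →ₗ[ℝ] ℝ) (f : Fin n → E →ₗ[ℝ] ℝ)
    (hf₀ : ∀ ω ∈ S, f₀ ω = 1) :
    (∀ (c₀ : ℝ) (c : Fin n → ℝ), c ≠ 0 →
        ∀ t : ℝ, ∃ ω ∈ S, c₀ * f₀ ω + ∑ i, c i * f i ω = t) ↔
      (∀ t : Fin n → ℝ, ∃ ω ∈ S, ∀ i, f i ω = t i) := by
  constructor
  · intro h1
    set L : E →ₗ[ℝ] (Fin n → ℝ) := LinearMap.pi f with hL
    set T : Set (Fin n → ℝ) := L '' S with hT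
    have hTconv : Convex ℝ T := hconv.linear_image L
    have hTne : T.Nonempty := hne.image L
    -- every nonzero functional on ℝⁿ attains every value on T
    have key : ∀ (c : Fin n → ℝ), c ≠ 0 → ∀ r : ℝ, ∃ x ∈ T, ∑ i, c i * x i = r := by
      intro c hc r
      obtain ⟨ω, hω, hωr⟩ := h1 0 c hc r
      refine ⟨L ω, ⟨ω, hω, rfl⟩, ?_⟩
      simpa [hL, LinearMap.pi_apply] using hωr
    -- closure of T is everything
    have hclT : closure T = Set.univ := by
      by_contra h
      obtain ⟨t', ht'⟩ : ∃ t', t' ∉ closure T :=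
        Set.ne_univ_iff_exists_notMem _ |>.mp h
      obtain ⟨g, u, hgu, hgt⟩ :=
        geometric_hahn_banach_closed_point (hTconv.closure) isClosed_closure ht'
      set c : Fin n → ℝ := fun i => g (fun j => if i = j then 1 else 0) with hcdef
      have hgval : ∀ x : Fin n → ℝ, g x = ∑ i, c i * x i := by
        intro x
        have := (g : (Fin n → ℝ) →ₗ[ℝ] ℝ).pi_apply_eq_sum_univ x
        simpa [hcdef, mul_comm, smul_eq_mul] using this
      have hc : c ≠ 0 := by
        intro hc0
        obtain ⟨x, hx⟩ := hTne
        have h1' : g x < u := hgu x (subset_closure hx)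
        have h2' : g x = 0 := by simp [hgval, hc0]
        have h3' : g t' = 0 := by
          have := hgval t'; simpa [hc0] using this
        rw [h2'] at h1'; rw [h3'] at hgt; linarith
      obtain ⟨x, hx, hxu⟩ := key c hc u
      have := hgu x (subset_closure hx)
      rw [hgval x, hxu] at this
      exact lt_irrefl u this
    -- interior of T is nonempty
    have hspan : affineSpan ℝ T = ⊤ := by
      have hTsub : T ⊆ (affineSpan ℝ T : Set (Fin n → ℝ)) := subset_affineSpan ℝ T
      have hclosed : IsClosed (affineSpan ℝ T : Set (Fin n → ℝ)) :=
        (affineSpan ℝ T).closed_of_finiteDimensional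
      have : closure T ⊆ (affineSpan ℝ T : Set (Fin n → ℝ)) :=
        closure_minimal hTsub hclosed
      rw [hclT] at this
      have hcoe : (affineSpan ℝ T : Set (Fin n → ℝ)) = Set.univ :=
        Set.univ_subset_iff.mp this
      exact (AffineSubspace.ext_iff _ _).mpr (by simp [hcoe])
    have hint : (interior T).Nonempty :=
      hTconv.interior_nonempty_iff_affineSpan_eq_top.mpr hspan
    -- conclude T = univ
    intro t
    obtain ⟨x, hx⟩ := hint
    have hy : (2 : ℝ) • t - x ∈ closure T := by rw [hclT]; trivial
    have ht : t ∈ interior T := by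
      have := hTconv.combo_interior_closure_subset_interior
        (a := (1/2 : ℝ)) (b := (1/2 : ℝ)) (by norm_num) (by norm_num) (by norm_num)
      have hmem : (1/2 : ℝ) • x + (1/2 : ℝ) • ((2 : ℝ) • t - x) ∈ interior T := by
        apply this
        exact Set.mem_image2_of_mem (Set.smul_mem_smul_set hx) (Set.smul_mem_smul_set hy)
      have heq : (1/2 : ℝ) • x + (1/2 : ℝ) • ((2 : ℝ) • t - x) = t := by
        ext i
        simp only [Pi.add_apply, Pi.smul_apply, Pi.sub_apply, smul_eq_mul]
        ring
      rwa [heq] at hmem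
    have : t ∈ T := interior_subset ht
    obtain ⟨ω, hω, hωt⟩ := this
    exact ⟨ω, hω, fun i => congrFun hωt i⟩
  · intro h2 c₀ c hc t
    obtain ⟨i, hci⟩ := Function.ne_iff.mp hc
    obtain ⟨ω, hω, hωt⟩ := h2 (Pi.single i ((t - c₀) / c i))
    refine ⟨ω, hω, ?_⟩
    have hsum : ∑ j, c j * f j ω = c i * ((t - c₀) / c i) := by
      rw [Finset.sum_eq_single i]
      · rw [hωt i, Pi.single_eq_same]
      · intro j _ hj
        rw [hωt j, Pi.single_eq_of_ne hj, mul_zero]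
      · intro hni; exact absurd (Finset.mem_univ i) hni
    rw [hf₀ ω hω, hsum, mul_div_cancel₀ _ hci]
    ring
end

section
/- Let E be a real vector space, S ⊆ E a nonempty convex subset, n ≥ 1, and f₁, …, fₙ : E → ℝ linear maps. Then { (f₁(ω), …, fₙ(ω)) : ω ∈ S } = ℝⁿ if and only if for every nonzero (l₁, …, lₙ) ∈ ℝⁿ the set { Σᵢ₌₁ⁿ lᵢ·fᵢ(ω) : ω ∈ S } equals all of ℝ. -/
/-- Identity-free version of Proposition 4.2: for a nonempty convex set `S` in
a real vector space `E` and linear maps `f₁, …, fₙ : E → ℝ`, the joint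
numerical range `{(f₁(ω),…,fₙ(ω)) : ω ∈ S}` is all of `ℝⁿ` if and only if
every nontrivial linear combination `Σ lᵢ fᵢ` attains every real value on
`S`. -/
theorem joint_range_univ_iff_numericalRange_unbounded
    {E : Type*} [AddCommGroup E] [Module ℝ E]
    {S : Set E} (hconv : Convex ℝ S) (hne : S.Nonempty)
    {n : ℕ} (hn : 1 ≤ n)
    (f : Fin n → E →ₗ[ℝ] ℝ) :
    ((fun ω => fun i => f i ω) '' S = Set.univ) ↔
      (∀ l : Fin n → ℝ, l ≠ 0 →
        (fun ω => ∑ i, l i * f i ω) '' S = Set.univ) := by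
  constructor
  · -- easy direction
    intro h l hl
    apply Set.eq_univ_of_forall
    intro t
    obtain ⟨i₀, hi₀⟩ : ∃ i, l i ≠ 0 := by
      by_contra hc
      push_neg at hc
      exact hl (funext hc)
    have hv : (Pi.single i₀ (t / l i₀) : Fin n → ℝ) ∈ Set.univ := Set.mem_univ _
    rw [← h] at hv
    obtain ⟨ω, hω, hωeq⟩ := hv
    refine ⟨ω, hω, ?_⟩
    have hfi : ∀ i, f i ω = (Pi.single i₀ (t / l i₀) : Fin n → ℝ) i := fun i => by
      simpa using congrFun hωeq i
    have hsum : ∑ i, l i * f i ω = l i₀ * (t / l i₀) := by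
      rw [Finset.sum_eq_single i₀]
      · rw [hfi i₀, Pi.single_eq_same]
      · intro b _ hb
        rw [hfi b, Pi.single_eq_of_ne hb, mul_zero]
      · intro hb; exact absurd (Finset.mem_univ i₀) hb
    show ∑ i, l i * f i ω = t
    rw [hsum]
    field_simp
  · -- hard direction
    intro h
    set F : E →ₗ[ℝ] (Fin n → ℝ) := LinearMap.pi f with hF
    have hFim : (fun ω => fun i => f i ω) '' S = F '' S := rfl
    set T : Set (Fin n → ℝ) := F '' S with hT
    have hTconv : Convex ℝ T := hconv.linear_image F
    have hTne : T.Nonempty := hne.image F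
    -- every nonzero linear functional is surjective on T
    have key : ∀ g : (Fin n → ℝ) →ₗ[ℝ] ℝ, g ≠ 0 → g '' T = Set.univ := by
      intro g hg
      set l : Fin n → ℝ := fun i => g (fun j => if i = j then 1 else 0) with hl
      have hgl : ∀ v : Fin n → ℝ, g v = ∑ i, l i * v i := by
        intro v
        rw [LinearMap.pi_apply_eq_sum_univ g v]
        exact Finset.sum_congr rfl (fun i _ => by rw [smul_eq_mul, mul_comm])
      have hlne : l ≠ 0 := by
        intro hl0
        apply hg
        apply LinearMap.ext
        intro v
        rw [hgl v, hl0]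
        simp
      have := h l hlne
      apply Set.eq_univ_of_forall
      intro t
      have ht : t ∈ (fun ω => ∑ i, l i * f i ω) '' S := this ▸ Set.mem_univ t
      obtain ⟨ω, hω, hωeq⟩ := ht
      exact ⟨F ω, ⟨ω, hω, rfl⟩, by rw [hgl]; exact hωeq⟩
    -- affine span of T is top
    have hspan : affineSpan ℝ T = ⊤ := by
      by_contra hsp
      obtain ⟨p, hp⟩ := hTne
      have hdir : (affineSpan ℝ T).direction ≠ ⊤ := by
        intro hd
        exact hsp ((AffineSubspace.direction_eq_top_iff_of_nonempty
          ((affineSpan_nonempty ℝ).mpr ⟨p, hp⟩)).mp hd)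
      obtain ⟨g, hg, hgbot⟩ :=
        Submodule.exists_dual_map_eq_bot_of_lt_top hdir.lt_top inferInstance
      have hconst : ∀ t ∈ T, g t = g p := by
        intro t ht
        have hsub : t - p ∈ (affineSpan ℝ T).direction := by
          have := AffineSubspace.vsub_mem_direction
            (subset_affineSpan ℝ T ht) (subset_affineSpan ℝ T hp)
          simpa using this
        have : g (t - p) = 0 := by
          have : g (t - p) ∈ Submodule.map g (affineSpan ℝ T).direction :=
            Submodule.mem_map_of_mem hsub
          rw [hgbot] at this
          simpa using this
        have h2 : g t - g p = 0 := by rw [← map_sub]; exact this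
        exact sub_eq_zero.mp h2
      have hsur := key g hg
      have : g p + 1 ∈ g '' T := hsur ▸ Set.mem_univ _
      obtain ⟨t, ht, hteq⟩ := this
      rw [hconst t ht] at hteq
      linarith
    -- so interior of T is nonempty
    obtain ⟨y, hy⟩ : (interior T).Nonempty :=
      (hTconv.interior_nonempty_iff_affineSpan_eq_top).mpr hspan
    rw [hFim]
    apply Set.eq_univ_of_forall
    intro x
    by_contra hx
    have hxint : x ∉ interior T := fun hc => hx (interior_subset hc)
    obtain ⟨g, hg⟩ := geometric_hahn_banach_open_point hTconv.interior isOpen_interior hxint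
    have hgy : g y < g x := hg y hy
    have hgne : (g : (Fin n → ℝ) →ₗ[ℝ] ℝ) ≠ 0 := by
      intro h0
      have hy0 : g y = 0 := congrFun (congrArg DFunLike.coe h0) y
      have hx0 : g x = 0 := congrFun (congrArg DFunLike.coe h0) x
      rw [hy0, hx0] at hgy
      exact lt_irrefl _ hgy
    have hsur := key g.toLinearMap hgne
    have : (2 * g x - g y) ∈ (g.toLinearMap) '' T := hsur ▸ Set.mem_univ _
    obtain ⟨t, ht, hteq⟩ := this
    have hmid : (1/2 : ℝ) • t + (1/2 : ℝ) • y ∈ interior T :=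
      hTconv.combo_closure_interior_mem_interior (subset_closure ht) hy
        (by norm_num) (by norm_num) (by norm_num)
    have := hg _ hmid
    have hgt : g t = 2 * g x - g y := hteq
    simp only [map_add, map_smul, smul_eq_mul] at this
    rw [hgt] at this
    linarith
end
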